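/- Tail bound via Hölder continuity: Let n ≥ 1 be an integer, γ > 1, s ∈ (0,1), β ∈ (s, 1), x₀ ∈ ℝⁿ, d ∈ (0, 1], and 0 < t ≤ d/4. There is a constant c = c(n, s, γ, β) > 0 such that for every measurable w : ℝⁿ → ℝ satisfying |w(x)| ≤ M for all x ∈ ℝⁿ and |w(x) − w(y)| ≤ H |x − y|^β for all x, y ∈ B_d(x₀) (with constants M, H ≥ 0), one has ∫_{ℝⁿ∖B_t(x₀)} |w(y) − (w)_{B_t(x₀)}|^γ |y − x₀|^{−n−sγ} dy ≤ c ( M^γ d^{−sγ} + H^γ d^{(β−s)γ} + H^γ t^{(β−s)γ} ). -/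

import Mathlib

open MeasureTheory Metric Set

/-- Average `(w)_{B_r(x₀)}` of `w` over the ball `B_r(x₀)`. -/
noncomputable def ballAvg {n : ℕ} (w : EuclideanSpace ℝ (Fin n) → ℝ)
    (x₀ : EuclideanSpace ℝ (Fin n)) (r : ℝ) : ℝ :=
  ⨍ x in ball x₀ r, w x

set_option maxHeartbeats 1000000

lemma radial_aux {n : ℕ} (hn : 1 ≤ n) (x₀ : EuclideanSpace ℝ (Fin n)) (f : ℝ → ℝ) :
    ∫ y : EuclideanSpace ℝ (Fin n), f ‖y - x₀‖ =
      (n : ℝ) * (volume (ball (0 : EuclideanSpace ℝ (Fin n)) 1)).toReal *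
        ∫ r in Ioi (0:ℝ), r ^ (n - 1) * f r := by
  haveI : Nontrivial (EuclideanSpace ℝ (Fin n)) := by
    have : 0 < Module.finrank ℝ (EuclideanSpace ℝ (Fin n)) := by
      rw [finrank_euclideanSpace_fin]; omega
    exact Module.nontrivial_of_finrank_pos this
  rw [MeasureTheory.integral_sub_right_eq_self (fun z => f ‖z‖) x₀]
  rw [MeasureTheory.integral_fun_norm_addHaar volume f]
  simp [finrank_euclideanSpace_fin, smul_eq_mul, mul_assoc]
  exact Or.inl (Or.inl rfl)

lemma oneD_tail_aux {n : ℕ} (hn : 1 ≤ n) {R σ : ℝ} (K : ℝ) (hR : 0 < R) (hσ : 0 < σ) :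
    ∫ r in Ioi (0:ℝ), r ^ (n-1) * (Ici R).indicator (fun r => K * r ^ (-((n:ℝ) + σ))) r
      = K * (R ^ (-σ) / σ) := by
  have h1 : ∀ r : ℝ, r ^ (n-1) * (Ici R).indicator (fun r => K * r ^ (-((n:ℝ) + σ))) r
      = (Ici R).indicator (fun r => r ^ (n-1) * (K * r ^ (-((n:ℝ) + σ)))) r := by
    intro r; by_cases h : r ∈ Ici R <;> simp [h]
  simp_rw [h1]
  rw [setIntegral_indicator measurableSet_Ici,
    show Ioi (0:ℝ) ∩ Ici R = Ici R from
      inter_eq_self_of_subset_right (fun x hx => lt_of_lt_of_le hR hx),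
    integral_Ici_eq_integral_Ioi]
  rw [setIntegral_congr_fun measurableSet_Ioi
    (g := fun r : ℝ => K * r ^ (-1 - σ)) ?_]
  · rw [MeasureTheory.integral_const_mul, integral_Ioi_rpow_of_lt (by linarith) hR]
    rw [show -1 - σ + 1 = -σ by ring]
    rw [neg_div, div_neg, neg_neg]
  · intro r hr
    have hr0 : (0:ℝ) < r := lt_trans hR hr
    simp only
    rw [mul_comm (r ^ (n-1)), mul_assoc]
    congr 1
    rw [← Real.rpow_natCast r (n-1), ← Real.rpow_add hr0]
    congr 1
    have : ((n - 1 : ℕ) : ℝ) = (n : ℝ) - 1 := by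
      have := Nat.cast_sub hn (R := ℝ); simpa using this
    rw [this]; ring

lemma oneD_annulus_aux {n : ℕ} (hn : 1 ≤ n) {t d p : ℝ} (K : ℝ) (ht : 0 < t) (htd : t ≤ d)
    (hp : 0 < p) :
    ∫ r in Ioi (0:ℝ), r ^ (n-1) * (Ico t d).indicator (fun r => K * r ^ (p - (n:ℝ))) r
      = K * ((d ^ p - t ^ p) / p) := by
  have h1 : ∀ r : ℝ, r ^ (n-1) * (Ico t d).indicator (fun r => K * r ^ (p - (n:ℝ))) r
      = (Ico t d).indicator (fun r => r ^ (n-1) * (K * r ^ (p - (n:ℝ)))) r := by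
    intro r; by_cases h : r ∈ Ico t d <;> simp [h]
  simp_rw [h1]
  rw [setIntegral_indicator measurableSet_Ico,
    show Ioi (0:ℝ) ∩ Ico t d = Ico t d from
      inter_eq_self_of_subset_right (fun x hx => lt_of_lt_of_le ht hx.1)]
  rw [setIntegral_congr_fun measurableSet_Ico (g := fun r : ℝ => K * r ^ (p - 1)) ?_]
  · have h2 : ∫ r in Ico t d, K * r ^ (p - 1) = ∫ r in t..d, K * r ^ (p - 1) := by
      rw [MeasureTheory.integral_Ico_eq_integral_Ioo,
        intervalIntegral.integral_of_le htd, MeasureTheory.integral_Ioc_eq_integral_Ioo]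
    rw [h2, intervalIntegral.integral_const_mul, integral_rpow (Or.inl (by linarith)),
      show p - 1 + 1 = p by ring]
  · intro r hr
    have hr0 : (0:ℝ) < r := lt_of_lt_of_le ht hr.1
    simp only
    rw [mul_comm (r ^ (n-1)), mul_assoc]
    congr 1
    rw [← Real.rpow_natCast r (n-1), ← Real.rpow_add hr0]
    congr 1
    have : ((n - 1 : ℕ) : ℝ) = (n : ℝ) - 1 := by
      have := Nat.cast_sub hn (R := ℝ); simpa using this
    rw [this]; ring

/-- **Tail bound via Hölder continuity.** For `n ≥ 1`, `γ > 1`, `s ∈ (0,1)`,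
`β ∈ (s,1)` there is `c = c(n,s,γ,β) > 0` such that for all `x₀ ∈ ℝⁿ`, `d ∈ (0,1]`,
`0 < t ≤ d/4`, `M, H ≥ 0`, and every measurable `w : ℝⁿ → ℝ` with `|w| ≤ M` on `ℝⁿ`
and `|w(x)-w(y)| ≤ H|x-y|^β` on `B_d(x₀)`,
`∫_{ℝⁿ∖B_t(x₀)} |w(y)-(w)_{B_t(x₀)}|^γ |y-x₀|^{-n-sγ} dy
  ≤ c (M^γ d^{-sγ} + H^γ d^{(β-s)γ} + H^γ t^{(β-s)γ})`. -/
theorem tail_bound_via_holder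
    (n : ℕ) (hn : 1 ≤ n) (γ s β : ℝ) (hγ : 1 < γ)
    (hs : s ∈ Set.Ioo (0 : ℝ) 1) (hβ : β ∈ Set.Ioo s 1) :
    ∃ c : ℝ, 0 < c ∧
      ∀ (x₀ : EuclideanSpace ℝ (Fin n)) (d t M H : ℝ),
        0 < d → d ≤ 1 → 0 < t → t ≤ d / 4 → 0 ≤ M → 0 ≤ H →
        ∀ w : EuclideanSpace ℝ (Fin n) → ℝ, Measurable w →
          (∀ x, |w x| ≤ M) →
          (∀ x ∈ ball x₀ d, ∀ y ∈ ball x₀ d, |w x - w y| ≤ H * ‖x - y‖ ^ β) →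
          ∫ y in (ball x₀ t)ᶜ,
              |w y - ballAvg w x₀ t| ^ γ / ‖y - x₀‖ ^ ((n : ℝ) + s * γ) ≤
            c * (M ^ γ * d ^ (-(s * γ)) + H ^ γ * d ^ ((β - s) * γ)
              + H ^ γ * t ^ ((β - s) * γ)) := by
  have hγ0 : (0:ℝ) < γ := by linarith
  have hs0 : 0 < s := hs.1
  have hβs : s < β := hβ.1
  have hβ1 : β < 1 := hβ.2
  have hβ0 : 0 < β := lt_trans hs0 hβs
  set p : ℝ := (β - s) * γ with hp_def
  have hp : 0 < p := by apply mul_pos <;> linarith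
  have hsγ : 0 < s * γ := mul_pos hs0 hγ0
  set Cn : ℝ := (n : ℝ) * (volume (ball (0 : EuclideanSpace ℝ (Fin n)) 1)).toReal with hCn_def
  have hCn0 : 0 ≤ Cn := by positivity
  set c1 : ℝ := Cn * 2 ^ γ * (1 / p) with hc1_def
  set c2 : ℝ := Cn * 2 ^ γ * (1 / (s * γ)) with hc2_def
  have hc10 : 0 ≤ c1 := by positivity
  have hc20 : 0 ≤ c2 := by positivity
  refine ⟨c1 + c2 + 1, by positivity, ?_⟩
  intro x₀ d t M H hd hd1 ht htd4 hM hH w hw hwM hwH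
  set α : ℝ := (n : ℝ) + s * γ with hα_def
  have hα0 : 0 < α := by positivity
  have htd : t ≤ d := by linarith
  have htd' : t < d := by linarith
  set A : ℝ := ballAvg w x₀ t with hA_def
  set μB : ℝ := (volume (ball x₀ t)).toReal with hμB_def
  have hμB0 : 0 < μB := by
    apply ENNReal.toReal_pos (measure_ball_pos volume x₀ ht).ne' measure_ball_lt_top.ne
  -- integrability of w on the small ball
  have hwInt : IntegrableOn w (ball x₀ t) volume := by
    refine Integrable.mono' (g := fun _ => M)
      ((integrableOn_const_iff).mpr (Or.inr measure_ball_lt_top)) hw.aestronglyMeasurable ?_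
    exact ae_of_all _ fun x => by simpa [Real.norm_eq_abs] using hwM x
  -- the average is bounded by M
  have hAM : |A| ≤ M := by
    have h1 : ‖∫ x in ball x₀ t, w x‖ ≤ M * μB :=
      norm_setIntegral_le_of_norm_le_const measure_ball_lt_top
        (fun x _ => by simpa [Real.norm_eq_abs] using hwM x)
    have h2 : A = μB⁻¹ * ∫ x in ball x₀ t, w x := by
      rw [hA_def, ballAvg, setAverage_eq, smul_eq_mul, hμB_def, measureReal_def]
    rw [h2, abs_mul, abs_inv, abs_of_pos hμB0]
    rw [Real.norm_eq_abs] at h1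
    calc μB⁻¹ * |∫ x in ball x₀ t, w x| ≤ μB⁻¹ * (M * μB) := by
          exact mul_le_mul_of_nonneg_left h1 (by positivity)
      _ = M := by field_simp
  -- Hölder bound against the average on the big ball
  have hdiff : ∀ y ∈ ball x₀ d, |w y - A| ≤ H * (‖y - x₀‖ + t) ^ β := by
    intro y hy
    have hkey : w y - A = μB⁻¹ * ∫ x in ball x₀ t, (w y - w x) := by
      rw [integral_sub ((integrableOn_const_iff (C := w y) (μ := volume)).mpr (Or.inr measure_ball_lt_top)) hwInt,
        setIntegral_const, smul_eq_mul]
      rw [hA_def, ballAvg, setAverage_eq, smul_eq_mul, measureReal_def, ← hμB_def]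
      field_simp
    have hb : ∀ x ∈ ball x₀ t, ‖w y - w x‖ ≤ H * (‖y - x₀‖ + t) ^ β := by
      intro x hx
      have hxd : x ∈ ball x₀ d := ball_subset_ball htd hx
      have h1 : |w y - w x| ≤ H * ‖y - x‖ ^ β := hwH y hy x hxd
      have h2 : ‖y - x‖ ≤ ‖y - x₀‖ + t := by
        have : ‖y - x‖ = ‖(y - x₀) - (x - x₀)‖ := by congr 1; abel
        rw [this]
        refine le_trans (norm_sub_le _ _) ?_
        have : ‖x - x₀‖ < t := by rwa [mem_ball, dist_eq_norm] at hx
        linarith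
      refine le_trans h1 ?_
      have := Real.rpow_le_rpow (norm_nonneg _) h2 hβ0.le
      exact mul_le_mul_of_nonneg_left this hH
    have h3 : ‖∫ x in ball x₀ t, (w y - w x)‖ ≤ (H * (‖y - x₀‖ + t) ^ β) * μB :=
      norm_setIntegral_le_of_norm_le_const measure_ball_lt_top hb
    rw [Real.norm_eq_abs] at h3
    rw [hkey, abs_mul, abs_inv, abs_of_pos hμB0]
    calc μB⁻¹ * |∫ x in ball x₀ t, (w y - w x)|
        ≤ μB⁻¹ * ((H * (‖y - x₀‖ + t) ^ β) * μB) :=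
          mul_le_mul_of_nonneg_left h3 (by positivity)
      _ = H * (‖y - x₀‖ + t) ^ β := by field_simp
  -- constants
  set K1 : ℝ := H ^ γ * 2 ^ (β * γ) with hK1_def
  set K2 : ℝ := 2 ^ γ * M ^ γ with hK2_def
  have hK10 : 0 ≤ K1 := by positivity
  have hK20 : 0 ≤ K2 := by positivity
  -- dominating functions
  set g1 : EuclideanSpace ℝ (Fin n) → ℝ :=
    (ball x₀ d \ ball x₀ t).indicator (fun y => K1 * ‖y - x₀‖ ^ (p - (n:ℝ))) with hg1_def
  set g2 : EuclideanSpace ℝ (Fin n) → ℝ :=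
    ((ball x₀ d)ᶜ).indicator (fun y => K2 * ‖y - x₀‖ ^ (-α)) with hg2_def
  have hg1nn : ∀ y, 0 ≤ g1 y := fun y =>
    Set.indicator_nonneg (fun y _ => by positivity) y
  have hg2nn : ∀ y, 0 ≤ g2 y := fun y =>
    Set.indicator_nonneg (fun y _ => by positivity) y
  -- membership descriptions
  have hmem1 : ∀ y : EuclideanSpace ℝ (Fin n),
      y ∈ ball x₀ d \ ball x₀ t ↔ ‖y - x₀‖ ∈ Ico t d := by
    intro y
    simp only [mem_diff, mem_ball, dist_eq_norm, mem_Ico, not_lt]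
    tauto
  have hmem2 : ∀ y : EuclideanSpace ℝ (Fin n),
      y ∈ (ball x₀ d)ᶜ ↔ ‖y - x₀‖ ∈ Ici d := by
    intro y
    simp only [mem_compl_iff, mem_ball, dist_eq_norm, mem_Ici, not_lt]
  -- integrability of g1
  have hInt1 : Integrable g1 volume := by
    rw [hg1_def, integrable_indicator_iff (measurableSet_ball.diff measurableSet_ball)]
    have hfin : volume (ball x₀ d \ ball x₀ t) < ⊤ :=
      lt_of_le_of_lt (measure_mono diff_subset) measure_ball_lt_top
    refine Integrable.mono' (g := fun _ => K1 * (t ^ (p - (n:ℝ)) + d ^ (p - (n:ℝ))))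
      ((integrableOn_const_iff).mpr (Or.inr hfin)) ?_ ?_
    · exact (((by measurability : Measurable (fun y : EuclideanSpace ℝ (Fin n) => ‖y - x₀‖ ^ (p - (n:ℝ)))).const_mul K1)).aestronglyMeasurable
    · filter_upwards [ae_restrict_mem (measurableSet_ball.diff measurableSet_ball)] with y hy
      rw [hmem1] at hy
      have hr0 : 0 < ‖y - x₀‖ := lt_of_lt_of_le ht hy.1
      have hrq : ‖y - x₀‖ ^ (p - (n:ℝ)) ≤ t ^ (p - (n:ℝ)) + d ^ (p - (n:ℝ)) := by
        rcases le_or_gt 0 (p - (n:ℝ)) with hq | hq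
        · have : ‖y - x₀‖ ^ (p - (n:ℝ)) ≤ d ^ (p - (n:ℝ)) :=
            Real.rpow_le_rpow hr0.le hy.2.le hq
          have ht' : 0 ≤ t ^ (p - (n:ℝ)) := Real.rpow_nonneg ht.le _
          linarith
        · have : ‖y - x₀‖ ^ (p - (n:ℝ)) ≤ t ^ (p - (n:ℝ)) :=
            Real.rpow_le_rpow_of_nonpos ht hy.1 hq.le
          have hd' : 0 ≤ d ^ (p - (n:ℝ)) := Real.rpow_nonneg hd.le _
          linarith
      rw [Real.norm_eq_abs, abs_of_nonneg (by positivity)]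
      exact mul_le_mul_of_nonneg_left hrq hK10
  -- integrability of g2
  have hInt2 : Integrable g2 volume := by
    have hαn : (Module.finrank ℝ (EuclideanSpace ℝ (Fin n)) : ℝ) < α := by
      rw [finrank_euclideanSpace_fin, hα_def]; linarith
    have hbase : Integrable (fun y : EuclideanSpace ℝ (Fin n) => (1 + ‖y‖) ^ (-α)) volume :=
      integrable_one_add_norm hαn
    have hdom : Integrable
        (fun y : EuclideanSpace ℝ (Fin n) =>
          (K2 * (1 + 1/d) ^ α) * (1 + ‖y - x₀‖) ^ (-α)) volume :=
      (hbase.comp_sub_right x₀).const_mul _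
    refine hdom.mono' ?_ ?_
    · exact ((((by measurability : Measurable (fun y : EuclideanSpace ℝ (Fin n) => ‖y - x₀‖ ^ (-α)))).const_mul K2).indicator
        measurableSet_ball.compl).aestronglyMeasurable
    · refine ae_of_all _ fun y => ?_
      by_cases hy : y ∈ (ball x₀ d)ᶜ
      · rw [hg2_def, Set.indicator_of_mem hy]
        have hdr : d ≤ ‖y - x₀‖ := (hmem2 y).mp hy
        have hr0 : 0 < ‖y - x₀‖ := lt_of_lt_of_le hd hdr
        have h2 : (1 + ‖y - x₀‖) ≤ (1 + 1/d) * ‖y - x₀‖ := by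
          have : 1 ≤ ‖y - x₀‖ / d := (one_le_div hd).mpr hdr
          have h3 : (1 + 1/d) * ‖y - x₀‖ = ‖y - x₀‖ + ‖y - x₀‖ / d := by ring
          rw [h3]; linarith
        have h3 : ((1 + 1/d) * ‖y - x₀‖) ^ (-α) ≤ (1 + ‖y - x₀‖) ^ (-α) :=
          Real.rpow_le_rpow_of_nonpos (by positivity) h2 (by linarith)
        rw [Real.mul_rpow (by positivity) hr0.le] at h3
        have h4 : ‖y - x₀‖ ^ (-α) ≤ (1 + 1/d) ^ α * (1 + ‖y - x₀‖) ^ (-α) := by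
          have h5 := mul_le_mul_of_nonneg_left h3 (Real.rpow_nonneg (by positivity : (0:ℝ) ≤ 1 + 1/d) α)
          calc ‖y - x₀‖ ^ (-α)
              = (1 + 1/d) ^ α * ((1 + 1/d) ^ (-α) * ‖y - x₀‖ ^ (-α)) := by
                rw [← mul_assoc, ← Real.rpow_add (by positivity), add_neg_cancel,
                  Real.rpow_zero, one_mul]
            _ ≤ (1 + 1/d) ^ α * (1 + ‖y - x₀‖) ^ (-α) := h5
        rw [Real.norm_eq_abs, abs_of_nonneg (by positivity)]
        calc K2 * ‖y - x₀‖ ^ (-α) ≤ K2 * ((1 + 1/d) ^ α * (1 + ‖y - x₀‖) ^ (-α)) :=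
              mul_le_mul_of_nonneg_left h4 hK20
          _ = (K2 * (1 + 1/d) ^ α) * (1 + ‖y - x₀‖) ^ (-α) := by ring
      · rw [hg2_def, Set.indicator_of_notMem hy, norm_zero]
        positivity
  -- pointwise bound
  have hpt : ∀ y, ((ball x₀ t)ᶜ).indicator
      (fun y => |w y - A| ^ γ / ‖y - x₀‖ ^ α) y ≤ g1 y + g2 y := by
    intro y
    by_cases hy : y ∈ (ball x₀ t)ᶜ
    swap
    · rw [Set.indicator_of_notMem hy]
      exact add_nonneg (hg1nn y) (hg2nn y)
    rw [Set.indicator_of_mem hy]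
    have hty : t ≤ ‖y - x₀‖ := by
      have := hy; rw [mem_compl_iff, mem_ball, dist_eq_norm, not_lt] at this; exact this
    have hr0 : 0 < ‖y - x₀‖ := lt_of_lt_of_le ht hty
    have hrα : 0 < ‖y - x₀‖ ^ α := Real.rpow_pos_of_pos hr0 _
    by_cases hyd : y ∈ ball x₀ d
    · -- annulus case
      have hg2y : g2 y = 0 := by
        rw [hg2_def, Set.indicator_of_notMem (by simpa using hyd)]
      have hg1y : g1 y = K1 * ‖y - x₀‖ ^ (p - (n:ℝ)) := by
        rw [hg1_def, Set.indicator_of_mem (by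
          rw [hmem1]; exact ⟨hty, by rwa [mem_ball, dist_eq_norm] at hyd⟩)]
      rw [hg1y, hg2y, add_zero]
      have hb1 : |w y - A| ≤ H * (2 * ‖y - x₀‖) ^ β := by
        refine le_trans (hdiff y hyd) ?_
        refine mul_le_mul_of_nonneg_left ?_ hH
        exact Real.rpow_le_rpow (by positivity) (by linarith) hβ0.le
      have hb2 : |w y - A| ^ γ ≤ K1 * ‖y - x₀‖ ^ (β * γ) := by
        have h1 : |w y - A| ^ γ ≤ (H * (2 * ‖y - x₀‖) ^ β) ^ γ :=
          Real.rpow_le_rpow (abs_nonneg _) hb1 hγ0.le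
        refine le_trans h1 (le_of_eq ?_)
        rw [Real.mul_rpow hH (by positivity),
          ← Real.rpow_mul (by positivity : (0:ℝ) ≤ 2 * ‖y - x₀‖),
          Real.mul_rpow (by norm_num) hr0.le, hK1_def]
        ring
      calc |w y - A| ^ γ / ‖y - x₀‖ ^ α ≤ (K1 * ‖y - x₀‖ ^ (β * γ)) / ‖y - x₀‖ ^ α := by
            gcongr
        _ = K1 * ‖y - x₀‖ ^ (p - (n:ℝ)) := by
            rw [mul_div_assoc, ← Real.rpow_sub hr0]
            congr 1
            rw [hp_def, hα_def]; ring
    · -- tail case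
      have hg1y : g1 y = 0 := by
        rw [hg1_def, Set.indicator_of_notMem (by
          intro hmem; exact hyd hmem.1)]
      have hg2y : g2 y = K2 * ‖y - x₀‖ ^ (-α) := by
        rw [hg2_def, Set.indicator_of_mem (by simpa using hyd)]
      rw [hg1y, hg2y, zero_add]
      have hb1 : |w y - A| ≤ 2 * M := by
        calc |w y - A| ≤ |w y| + |A| := by
              rw [sub_eq_add_neg]
              exact (abs_add_le _ _).trans (by rw [abs_neg])
          _ ≤ M + M := add_le_add (hwM y) hAM
          _ = 2 * M := by ring
      have hb2 : |w y - A| ^ γ ≤ K2 := by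
        have h1 : |w y - A| ^ γ ≤ (2 * M) ^ γ :=
          Real.rpow_le_rpow (abs_nonneg _) hb1 hγ0.le
        rwa [Real.mul_rpow (by norm_num) hM, ← hK2_def] at h1
      calc |w y - A| ^ γ / ‖y - x₀‖ ^ α ≤ K2 / ‖y - x₀‖ ^ α := by gcongr
        _ = K2 * ‖y - x₀‖ ^ (-α) := by
            rw [Real.rpow_neg hr0.le, div_eq_mul_inv]
  -- values of the dominating integrals
  have hI1 : ∫ y, g1 y = Cn * (K1 * ((d ^ p - t ^ p) / p)) := by
    have heq : ∀ y : EuclideanSpace ℝ (Fin n),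
        g1 y = (fun r => (Ico t d).indicator (fun r => K1 * r ^ (p - (n:ℝ))) r) ‖y - x₀‖ := by
      intro y
      by_cases h : ‖y - x₀‖ ∈ Ico t d
      · rw [hg1_def, Set.indicator_of_mem ((hmem1 y).mpr h)]
        simp only [Set.indicator_of_mem h]
      · rw [hg1_def, Set.indicator_of_notMem (fun hc => h ((hmem1 y).mp hc))]
        simp only [Set.indicator_of_notMem h]
    rw [funext heq] at *
    rw [show (∫ y, (fun r => (Ico t d).indicator (fun r => K1 * r ^ (p - (n:ℝ))) r) ‖y - x₀‖)
        = (n : ℝ) * (volume (ball (0 : EuclideanSpace ℝ (Fin n)) 1)).toReal *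
          ∫ r in Ioi (0:ℝ), r ^ (n - 1) *
            (Ico t d).indicator (fun r => K1 * r ^ (p - (n:ℝ))) r from
      radial_aux hn x₀ _]
    rw [oneD_annulus_aux hn K1 ht htd hp, hCn_def]
  have hI2 : ∫ y, g2 y = Cn * (K2 * (d ^ (-(s * γ)) / (s * γ))) := by
    have heq : ∀ y : EuclideanSpace ℝ (Fin n),
        g2 y = (fun r => (Ici d).indicator (fun r => K2 * r ^ (-α)) r) ‖y - x₀‖ := by
      intro y
      by_cases h : ‖y - x₀‖ ∈ Ici d
      · rw [hg2_def, Set.indicator_of_mem ((hmem2 y).mpr h)]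
        simp only [Set.indicator_of_mem h]
      · rw [hg2_def, Set.indicator_of_notMem (fun hc => h ((hmem2 y).mp hc))]
        simp only [Set.indicator_of_notMem h]
    rw [funext heq] at *
    rw [show (∫ y, (fun r => (Ici d).indicator (fun r => K2 * r ^ (-α)) r) ‖y - x₀‖)
        = (n : ℝ) * (volume (ball (0 : EuclideanSpace ℝ (Fin n)) 1)).toReal *
          ∫ r in Ioi (0:ℝ), r ^ (n - 1) *
            (Ici d).indicator (fun r => K2 * r ^ (-α)) r from
      radial_aux hn x₀ _]
    have : ∫ r in Ioi (0:ℝ), r ^ (n - 1) * (Ici d).indicator (fun r => K2 * r ^ (-α)) r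
        = K2 * (d ^ (-(s * γ)) / (s * γ)) := by
      have := oneD_tail_aux hn (R := d) (σ := s * γ) K2 hd hsγ
      rw [hα_def]
      exact this
    rw [this, hCn_def]
  -- main chain
  have hmain : ∫ y in (ball x₀ t)ᶜ, |w y - A| ^ γ / ‖y - x₀‖ ^ α
      ≤ Cn * (K1 * ((d ^ p - t ^ p) / p)) + Cn * (K2 * (d ^ (-(s * γ)) / (s * γ))) := by
    rw [← integral_indicator measurableSet_ball.compl]
    calc ∫ y, ((ball x₀ t)ᶜ).indicator (fun y => |w y - A| ^ γ / ‖y - x₀‖ ^ α) y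
        ≤ ∫ y, (g1 y + g2 y) := by
          refine integral_mono_of_nonneg (ae_of_all _ fun y =>
            Set.indicator_nonneg (fun y _ => by positivity) y)
            (hInt1.add hInt2) (ae_of_all _ hpt)
      _ = (∫ y, g1 y) + ∫ y, g2 y := integral_add hInt1 hInt2
      _ = _ := by rw [hI1, hI2]
  -- final algebra
  have h2βγ : (2:ℝ) ^ (β * γ) ≤ 2 ^ γ := by
    apply Real.rpow_le_rpow_of_exponent_le one_le_two
    nlinarith
  have hT1 : Cn * (K1 * ((d ^ p - t ^ p) / p)) ≤ c1 * (H ^ γ * d ^ p) := by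
    have e1 : (d ^ p - t ^ p) / p ≤ d ^ p / p := by
      have h0 : 0 ≤ t ^ p := Real.rpow_nonneg ht.le _
      gcongr
      linarith
    have e0 : 0 ≤ (d ^ p - t ^ p) / p := by
      apply div_nonneg _ hp.le
      have := Real.rpow_le_rpow ht.le htd hp.le
      linarith
    have e2 : K1 * ((d ^ p - t ^ p) / p) ≤ (H ^ γ * 2 ^ γ) * (d ^ p / p) := by
      apply mul_le_mul _ e1 e0 (by positivity)
      rw [hK1_def]
      exact mul_le_mul_of_nonneg_left h2βγ (by positivity)
    calc Cn * (K1 * ((d ^ p - t ^ p) / p)) ≤ Cn * ((H ^ γ * 2 ^ γ) * (d ^ p / p)) :=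
          mul_le_mul_of_nonneg_left e2 hCn0
      _ = c1 * (H ^ γ * d ^ p) := by rw [hc1_def]; ring
  have hT2 : Cn * (K2 * (d ^ (-(s * γ)) / (s * γ))) = c2 * (M ^ γ * d ^ (-(s * γ))) := by
    rw [hc2_def, hK2_def]; ring
  have ha0 : 0 ≤ M ^ γ * d ^ (-(s * γ)) := by positivity
  have hb0 : 0 ≤ H ^ γ * d ^ p := by positivity
  have he0 : 0 ≤ H ^ γ * t ^ p := by positivity
  calc ∫ y in (ball x₀ t)ᶜ, |w y - A| ^ γ / ‖y - x₀‖ ^ α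
      ≤ Cn * (K1 * ((d ^ p - t ^ p) / p)) + Cn * (K2 * (d ^ (-(s * γ)) / (s * γ))) := hmain
    _ ≤ c1 * (H ^ γ * d ^ p) + c2 * (M ^ γ * d ^ (-(s * γ))) := by
        rw [hT2]; linarith
    _ ≤ (c1 + c2 + 1) * (M ^ γ * d ^ (-(s * γ)) + H ^ γ * d ^ p + H ^ γ * t ^ p) := by
        nlinarith [mul_nonneg hc10 ha0, mul_nonneg hc20 hb0, mul_nonneg hc10 he0,
          mul_nonneg hc20 he0]
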